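/- Let $p$ be a prime, and let $F$ be a field with a nonarchimedean absolute value $|\cdot|$. Let $\pi, \zeta, s, t, \beta, \beta' \in F$ satisfy: $\omega := \zeta^p$ is a primitive $p$-th root of unity; $|1 - \zeta| < 1$; $0 < |\pi| < 1$ and $|1 - \omega| = |\pi|$; $|t|^p = |\pi|$; $|s| = |s-1| = 1$; and $0 < |\beta| \le |\pi|^5$, $0 < |\beta'| \le |\pi|^5$. For $0 \le i \le p-1$ set $c_i = \zeta\omega^i$ and $d_i = s + t\omega^i$. Then the $4p$ closed discs $\{z : |z - c_i| \le |\pi| |t|\}$, $\{z : |z - \pi c_i| \le |\beta| (|\pi| |t|)^{-1}\}$, $\{z : |z - d_i| \le |\pi| |t|^2\}$, and $\{z : |z - \pi d_i| \le |\beta'| (|\pi| |t|^2)^{-1}\}$ (for $0 \le i \le p-1$) are pairwise disjoint subsets of $F$. -/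

import Mathlib

section Helpers
variable {F : Type*} [Field F] (v : AbsoluteValue F ℝ) (hna : IsNonarchimedean v)
include hna

private lemma na_sub' (x y : F) : v (x - y) ≤ max (v x) (v y) := by
  rw [sub_eq_add_neg]
  simpa using hna x (-y)

private lemma na_dominant {x y : F} (h : v y < v x) : v (x + y) = v x := by
  refine le_antisymm ((hna x y).trans (max_le le_rfl h.le)) ?_
  by_contra hlt
  push_neg at hlt
  have h1 : x = (x + y) - y := by ring
  have h2 : v x ≤ max (v (x + y)) (v y) := by
    conv_lhs => rw [h1]
    exact na_sub' v hna (x + y) y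
  have h3 := max_lt hlt h
  linarith

private lemma na_disc_disjoint {x y : F} {rx ry : ℝ}
    (hx : rx < v (x - y)) (hy : ry < v (x - y)) :
    Disjoint {z : F | v (z - x) ≤ rx} {z : F | v (z - y) ≤ ry} := by
  rw [Set.disjoint_left]
  intro z hzx hzy
  have hh : x - y = (z - y) - (z - x) := by ring
  have h2 : v (x - y) ≤ max (v (z - y)) (v (z - x)) := by
    conv_lhs => rw [hh]
    exact na_sub' v hna _ _
  have h3 : max (v (z - y)) (v (z - x)) ≤ max ry rx :=
    max_le_max hzy hzx
  have := lt_of_le_of_lt (h2.trans h3) (max_lt hy hx)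
  exact absurd this (lt_irrefl _)

private lemma na_one_sub_pow {x : F} (hx : v x ≤ 1) (n : ℕ) :
    v (1 - x ^ n) ≤ v (1 - x) := by
  induction n with
  | zero => simpa using v.nonneg (1 - x)
  | succ n ih =>
    have h : 1 - x ^ (n + 1) = (1 - x ^ n) + x ^ n * (1 - x) := by ring
    rw [h]
    refine (hna _ _).trans (max_le ih ?_)
    rw [v.map_mul]
    calc v (x ^ n) * v (1 - x) ≤ 1 * v (1 - x) := by
          apply mul_le_mul_of_nonneg_right _ (v.nonneg _)
          rw [map_pow]
          exact pow_le_one₀ (v.nonneg x) hx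
      _ = v (1 - x) := one_mul _

end Helpers

/-- Under the hypotheses of the genus-`2p` example
(`ω = ζ^p` is a primitive `p`-th root of unity, `|1 - ζ| < 1`, `0 < |π| < 1`,
`|1 - ω| = |π|`, `|t|^p = |π|`, `|s| = |s - 1| = 1`, `0 < |β|, |β'| ≤ |π|^5`),
the `4p` closed discs of centers `cᵢ = ζ ωⁱ`, `π cᵢ`, `dᵢ = s + t ωⁱ`, `π dᵢ` and radii
`|π||t|`, `|β|(|π||t|)⁻¹`, `|π||t|²`, `|β'|(|π||t|²)⁻¹` are pairwise disjoint. -/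
theorem schottky_figure_discs_pairwise_disjoint {F : Type*} [Field F]
    (v : AbsoluteValue F ℝ) (hna : IsNonarchimedean v)
    (p : ℕ) (hp : p.Prime) (π ζ s t β β' : F)
    (hω_pow : (ζ ^ p) ^ p = 1) (hω_prim : ∀ k : ℕ, 0 < k → k < p → (ζ ^ p) ^ k ≠ 1)
    (hζ : v (1 - ζ) < 1)
    (hπ0 : 0 < v π) (hπ1 : v π < 1) (hωπ : v (1 - ζ ^ p) = v π)
    (ht : v t ^ p = v π)
    (hs : v s = 1) (hs1 : v (s - 1) = 1)
    (hβ0 : 0 < v β) (hβ : v β ≤ v π ^ 5) (hβ'0 : 0 < v β') (hβ' : v β' ≤ v π ^ 5)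
    (D : Fin 4 → Fin p → Set F)
    (hD0 : ∀ i : Fin p, D 0 i = {z : F | v (z - ζ * (ζ ^ p) ^ (i : ℕ)) ≤ v π * v t})
    (hD1 : ∀ i : Fin p, D 1 i =
      {z : F | v (z - π * (ζ * (ζ ^ p) ^ (i : ℕ))) ≤ v β * (v π * v t)⁻¹})
    (hD2 : ∀ i : Fin p, D 2 i =
      {z : F | v (z - (s + t * (ζ ^ p) ^ (i : ℕ))) ≤ v π * v t ^ 2})
    (hD3 : ∀ i : Fin p, D 3 i =
      {z : F | v (z - π * (s + t * (ζ ^ p) ^ (i : ℕ))) ≤ v β' * (v π * v t ^ 2)⁻¹}) :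
    ∀ a b : Fin 4, ∀ i j : Fin p, (a, i) ≠ (b, j) → Disjoint (D a i) (D b j) := by
  intro a b i j hne
  -- basic facts about |t|
  have hu0 : 0 < v t := by
    rcases (v.nonneg t).lt_or_eq with h | h
    · exact h
    · exfalso
      rw [← h, zero_pow hp.ne_zero] at ht
      exact absurd ht.symm (ne_of_gt hπ0)
  have hu1 : v t < 1 := by
    by_contra h
    push_neg at h
    have : (1 : ℝ) ≤ v t ^ p := one_le_pow₀ h
    rw [ht] at this
    linarith
  have hq_u2 : v π ≤ v t ^ 2 := by
    rw [← ht]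
    exact pow_le_pow_of_le_one hu0.le hu1.le hp.two_le
  -- numeric inequalities
  have hu3lt1 : v t ^ 3 < 1 := pow_lt_one₀ hu0.le hu1 (by norm_num)
  have hu4 : v t ^ 4 < v t := by nlinarith [mul_pos hu0 (sub_pos.mpr hu3lt1)]
  have hu4u3 : v t ^ 4 < v t ^ 3 := by
    nlinarith [mul_pos (pow_pos hu0 3) (sub_pos.mpr hu1)]
  have hq2le : v π * v π ≤ v t ^ 4 := by
    nlinarith [mul_le_mul hq_u2 hq_u2 hπ0.le (pow_nonneg hu0.le 2)]
  have hq2u : v π * v π < v t := lt_of_le_of_lt hq2le hu4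
  have hq2u3 : v π * v π < v t ^ 3 := lt_of_le_of_lt hq2le hu4u3
  have hqu0 : (0 : ℝ) < v π * v t := mul_pos hπ0 hu0
  have hqu20 : (0 : ℝ) < v π * v t ^ 2 := mul_pos hπ0 (pow_pos hu0 2)
  have n1 : v π * v t < v π := mul_lt_of_lt_one_right hπ0 hu1
  have n2 : v π * v t ^ 2 < v π * v t := by
    nlinarith [mul_pos hπ0 (mul_pos hu0 (sub_pos.mpr hu1))]
  have n3 : v β * (v π * v t)⁻¹ < v π * v π := by
    rw [← div_eq_mul_inv, div_lt_iff₀ hqu0]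
    calc v β ≤ v π ^ 5 := hβ
      _ = (v π * v π) * v π ^ 3 := by ring
      _ < v t * v π ^ 3 := mul_lt_mul_of_pos_right hq2u (pow_pos hπ0 3)
      _ = v π * v π * (v π * v t) := by ring
  have n4 : v β' * (v π * v t ^ 2)⁻¹ < v π * (v π * v t) := by
    rw [← div_eq_mul_inv, div_lt_iff₀ hqu20]
    calc v β' ≤ v π ^ 5 := hβ'
      _ = (v π * v π) * v π ^ 3 := by ring
      _ < v t ^ 3 * v π ^ 3 := mul_lt_mul_of_pos_right hq2u3 (pow_pos hπ0 3)
      _ = v π * (v π * v t) * (v π * v t ^ 2) := by ring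
  have hqq : v π * v π < v π := mul_lt_of_lt_one_right hπ0 hπ1
  have n1' : v π * v t < 1 := n1.trans hπ1
  have n2' : v π * v t ^ 2 < 1 := n2.trans n1'
  have n3q : v β * (v π * v t)⁻¹ < v π := n3.trans hqq
  have n3' : v β * (v π * v t)⁻¹ < 1 := n3q.trans hπ1
  have n4q : v β' * (v π * v t ^ 2)⁻¹ < v π := by
    have h := mul_lt_of_lt_one_right (mul_pos hπ0 hπ0) hu1
    nlinarith [n4, hqq]
  have n4' : v β' * (v π * v t ^ 2)⁻¹ < 1 := n4q.trans hπ1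
  -- structural absolute-value facts
  have hvζ : v ζ = 1 := by
    have h1 : ζ = 1 + -(1 - ζ) := by ring
    have h2 : v (-(1 - ζ)) < v (1 : F) := by
      rw [v.map_neg, v.map_one]; exact hζ
    rw [h1, na_dominant v hna h2, v.map_one]
  have hvω : v (ζ ^ p) = 1 := by rw [map_pow, hvζ, one_pow]
  have hvωk : ∀ k : ℕ, v ((ζ ^ p) ^ k) = 1 := fun k => by rw [map_pow, hvω, one_pow]
  have hL2 : ∀ k : ℕ, v (1 - (ζ ^ p) ^ k) ≤ v π := fun k =>
    (na_one_sub_pow v hna hvω.le k).trans (le_of_eq hωπ)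
  have hL3' : ∀ k : ℕ, 0 < k → k < p → v (1 - (ζ ^ p) ^ k) = v π := by
    intro k hk0 hkp
    refine le_antisymm (hL2 k) ?_
    have hcop : Nat.Coprime k p :=
      Nat.Coprime.symm (hp.coprime_iff_not_dvd.mpr (Nat.not_dvd_of_pos_of_lt hk0 hkp))
    obtain ⟨m, -, hm⟩ := Nat.exists_mul_mod_eq_one_of_coprime hcop hp.one_lt
    have hpow : ((ζ ^ p) ^ k) ^ m = ζ ^ p := by
      rw [← pow_mul]
      conv_lhs => rw [← Nat.div_add_mod (k * m) p]
      rw [pow_add, pow_mul, hω_pow, one_pow, hm, pow_one, one_mul]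
    calc v π = v (1 - ζ ^ p) := hωπ.symm
      _ = v (1 - ((ζ ^ p) ^ k) ^ m) := by rw [hpow]
      _ ≤ v (1 - (ζ ^ p) ^ k) := na_one_sub_pow v hna (hvωk k).le m
  have hL3 : ∀ i j : ℕ, i < j → j < p → v ((ζ ^ p) ^ i - (ζ ^ p) ^ j) = v π := by
    intro i j hij hjp
    have he : (ζ ^ p) ^ i - (ζ ^ p) ^ j = (ζ ^ p) ^ i * (1 - (ζ ^ p) ^ (j - i)) := by
      rw [mul_sub, mul_one, ← pow_add, Nat.add_sub_cancel' hij.le]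
    rw [he, v.map_mul, hvωk, one_mul]
    exact hL3' (j - i) (by omega) (by omega)
  have hdist_ω : ∀ i j : Fin p, i ≠ j →
      v ((ζ ^ p) ^ (i : ℕ) - (ζ ^ p) ^ (j : ℕ)) = v π := by
    intro i j hij
    rcases lt_trichotomy (i : ℕ) (j : ℕ) with h | h | h
    · exact hL3 _ _ h j.isLt
    · exact absurd (Fin.ext h) hij
    · rw [v.map_sub]; exact hL3 _ _ h i.isLt
  have hc : ∀ i : ℕ, v (ζ * (ζ ^ p) ^ i) = 1 := fun i => by
    rw [v.map_mul, hvζ, hvωk, one_mul]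
  have hζω1 : ∀ i : ℕ, v (ζ * (ζ ^ p) ^ i - 1) < 1 := by
    intro i
    have he : ζ * (ζ ^ p) ^ i - 1 = ζ * ((ζ ^ p) ^ i - 1) + (ζ - 1) := by ring
    rw [he]
    refine lt_of_le_of_lt (hna _ _) (max_lt ?_ ?_)
    · rw [v.map_mul, hvζ, one_mul, v.map_sub]
      exact lt_of_le_of_lt (hL2 i) hπ1
    · rw [v.map_sub]; exact hζ
  have hvt : ∀ i : ℕ, v (t * (ζ ^ p) ^ i) = v t := fun i => by
    rw [v.map_mul, hvωk, mul_one]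
  have hd : ∀ i : ℕ, v (s + t * (ζ ^ p) ^ i) = 1 := by
    intro i
    have h : v (t * (ζ ^ p) ^ i) < v s := by rw [hvt, hs]; exact hu1
    rw [na_dominant v hna h, hs]
  have hcd : ∀ i j : ℕ, v (ζ * (ζ ^ p) ^ i - (s + t * (ζ ^ p) ^ j)) = 1 := by
    intro i j
    have he : ζ * (ζ ^ p) ^ i - (s + t * (ζ ^ p) ^ j)
        = (1 - s) + ((ζ * (ζ ^ p) ^ i - 1) - t * (ζ ^ p) ^ j) := by ring
    have h1 : v ((ζ * (ζ ^ p) ^ i - 1) - t * (ζ ^ p) ^ j) < v (1 - s) := by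
      rw [v.map_sub 1 s, hs1]
      refine lt_of_le_of_lt (na_sub' v hna _ _) (max_lt (hζω1 i) ?_)
      rw [hvt]; exact hu1
    rw [he, na_dominant v hna h1, v.map_sub, hs1]
  have hdom1 : ∀ A B : F, v A = 1 → v B = 1 → v (A - π * B) = 1 := by
    intro A B hA hB
    have he : A - π * B = A + -(π * B) := by ring
    have h1 : v (-(π * B)) < v A := by
      rw [v.map_neg, v.map_mul, hB, mul_one, hA]; exact hπ1
    rw [he, na_dominant v hna h1, hA]
  have hππ : ∀ A B : F, v (π * A - π * B) = v π * v (A - B) := by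
    intro A B
    have he : π * A - π * B = π * (A - B) := by ring
    rw [he, v.map_mul]
  -- the ten center-distance computations (in one fixed orientation each)
  have dcc : ∀ i j : Fin p, i ≠ j →
      v (ζ * (ζ ^ p) ^ (i : ℕ) - ζ * (ζ ^ p) ^ (j : ℕ)) = v π := by
    intro i j hij
    have he : ζ * (ζ ^ p) ^ (i : ℕ) - ζ * (ζ ^ p) ^ (j : ℕ)
        = ζ * ((ζ ^ p) ^ (i : ℕ) - (ζ ^ p) ^ (j : ℕ)) := by ring
    rw [he, v.map_mul, hvζ, one_mul]
    exact hdist_ω i j hij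
  have ddd : ∀ i j : Fin p, i ≠ j →
      v ((s + t * (ζ ^ p) ^ (i : ℕ)) - (s + t * (ζ ^ p) ^ (j : ℕ))) = v π * v t := by
    intro i j hij
    have he : (s + t * (ζ ^ p) ^ (i : ℕ)) - (s + t * (ζ ^ p) ^ (j : ℕ))
        = t * ((ζ ^ p) ^ (i : ℕ) - (ζ ^ p) ^ (j : ℕ)) := by ring
    rw [he, v.map_mul, hdist_ω i j hij, mul_comm]
  have dπcc : ∀ i j : Fin p, i ≠ j →
      v (π * (ζ * (ζ ^ p) ^ (i : ℕ)) - π * (ζ * (ζ ^ p) ^ (j : ℕ))) = v π * v π := by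
    intro i j hij
    rw [hππ, dcc i j hij]
  have dπdd : ∀ i j : Fin p, i ≠ j →
      v (π * (s + t * (ζ ^ p) ^ (i : ℕ)) - π * (s + t * (ζ ^ p) ^ (j : ℕ)))
        = v π * (v π * v t) := by
    intro i j hij
    rw [hππ, ddd i j hij]
  have dcπc : ∀ i j : Fin p,
      v (ζ * (ζ ^ p) ^ (i : ℕ) - π * (ζ * (ζ ^ p) ^ (j : ℕ))) = 1 :=
    fun i j => hdom1 _ _ (hc i) (hc j)
  have dcπd : ∀ i j : Fin p,
      v (ζ * (ζ ^ p) ^ (i : ℕ) - π * (s + t * (ζ ^ p) ^ (j : ℕ))) = 1 :=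
    fun i j => hdom1 _ _ (hc i) (hd j)
  have ddπc : ∀ i j : Fin p,
      v ((s + t * (ζ ^ p) ^ (i : ℕ)) - π * (ζ * (ζ ^ p) ^ (j : ℕ))) = 1 :=
    fun i j => hdom1 _ _ (hd i) (hc j)
  have ddπd : ∀ i j : Fin p,
      v ((s + t * (ζ ^ p) ^ (i : ℕ)) - π * (s + t * (ζ ^ p) ^ (j : ℕ))) = 1 :=
    fun i j => hdom1 _ _ (hd i) (hd j)
  have dπcπd : ∀ i j : Fin p,
      v (π * (ζ * (ζ ^ p) ^ (i : ℕ)) - π * (s + t * (ζ ^ p) ^ (j : ℕ))) = v π := by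
    intro i j
    rw [hππ, hcd (i : ℕ) (j : ℕ), mul_one]
  -- case analysis
  fin_cases a <;> fin_cases b
  -- (0,0)
  · show Disjoint (D 0 i) (D 0 j)
    have hij : i ≠ j := fun h => hne (by rw [h])
    rw [hD0 i, hD0 j]
    exact na_disc_disjoint v hna
      (by rw [dcc i j hij]; exact n1) (by rw [dcc i j hij]; exact n1)
  -- (0,1)
  · show Disjoint (D 0 i) (D 1 j)
    rw [hD0 i, hD1 j]
    exact na_disc_disjoint v hna
      (by rw [dcπc i j]; exact n1') (by rw [dcπc i j]; exact n3')
  -- (0,2)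
  · show Disjoint (D 0 i) (D 2 j)
    rw [hD0 i, hD2 j]
    exact na_disc_disjoint v hna
      (by rw [hcd (i : ℕ) (j : ℕ)]; exact n1') (by rw [hcd (i : ℕ) (j : ℕ)]; exact n2')
  -- (0,3)
  · show Disjoint (D 0 i) (D 3 j)
    rw [hD0 i, hD3 j]
    exact na_disc_disjoint v hna
      (by rw [dcπd i j]; exact n1') (by rw [dcπd i j]; exact n4')
  -- (1,0)
  · show Disjoint (D 1 i) (D 0 j)
    rw [hD1 i, hD0 j]
    exact na_disc_disjoint v hna
      (by rw [v.map_sub, dcπc j i]; exact n3') (by rw [v.map_sub, dcπc j i]; exact n1')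
  -- (1,1)
  · show Disjoint (D 1 i) (D 1 j)
    have hij : i ≠ j := fun h => hne (by rw [h])
    rw [hD1 i, hD1 j]
    exact na_disc_disjoint v hna
      (by rw [dπcc i j hij]; exact n3) (by rw [dπcc i j hij]; exact n3)
  -- (1,2)
  · show Disjoint (D 1 i) (D 2 j)
    rw [hD1 i, hD2 j]
    exact na_disc_disjoint v hna
      (by rw [v.map_sub, ddπc j i]; exact n3') (by rw [v.map_sub, ddπc j i]; exact n2')
  -- (1,3)
  · show Disjoint (D 1 i) (D 3 j)
    rw [hD1 i, hD3 j]
    exact na_disc_disjoint v hna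
      (by rw [dπcπd i j]; exact n3q) (by rw [dπcπd i j]; exact n4q)
  -- (2,0)
  · show Disjoint (D 2 i) (D 0 j)
    rw [hD2 i, hD0 j]
    exact na_disc_disjoint v hna
      (by rw [v.map_sub, hcd (j : ℕ) (i : ℕ)]; exact n2')
      (by rw [v.map_sub, hcd (j : ℕ) (i : ℕ)]; exact n1')
  -- (2,1)
  · show Disjoint (D 2 i) (D 1 j)
    rw [hD2 i, hD1 j]
    exact na_disc_disjoint v hna
      (by rw [ddπc i j]; exact n2') (by rw [ddπc i j]; exact n3')
  -- (2,2)
  · show Disjoint (D 2 i) (D 2 j)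
    have hij : i ≠ j := fun h => hne (by rw [h])
    rw [hD2 i, hD2 j]
    exact na_disc_disjoint v hna
      (by rw [ddd i j hij]; exact n2) (by rw [ddd i j hij]; exact n2)
  -- (2,3)
  · show Disjoint (D 2 i) (D 3 j)
    rw [hD2 i, hD3 j]
    exact na_disc_disjoint v hna
      (by rw [ddπd i j]; exact n2') (by rw [ddπd i j]; exact n4')
  -- (3,0)
  · show Disjoint (D 3 i) (D 0 j)
    rw [hD3 i, hD0 j]
    exact na_disc_disjoint v hna
      (by rw [v.map_sub, dcπd j i]; exact n4') (by rw [v.map_sub, dcπd j i]; exact n1')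
  -- (3,1)
  · show Disjoint (D 3 i) (D 1 j)
    rw [hD3 i, hD1 j]
    exact na_disc_disjoint v hna
      (by rw [v.map_sub, dπcπd j i]; exact n4q) (by rw [v.map_sub, dπcπd j i]; exact n3q)
  -- (3,2)
  · show Disjoint (D 3 i) (D 2 j)
    rw [hD3 i, hD2 j]
    exact na_disc_disjoint v hna
      (by rw [v.map_sub, ddπd j i]; exact n4') (by rw [v.map_sub, ddπd j i]; exact n2')
  -- (3,3)
  · show Disjoint (D 3 i) (D 3 j)
    have hij : i ≠ j := fun h => hne (by rw [h])
    rw [hD3 i, hD3 j]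
    exact na_disc_disjoint v hna
      (by rw [dπdd i j hij]; exact n4) (by rw [dπdd i j hij]; exact n4)
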